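/- The determinant of the N×N matrix with (i,j) entry the binomial coefficient C(M+i−j, L−N+i−j) equals the product over j from 1 to N of ((j−1)!·(M−N+j)!)/((L−N+j−1)!·(M−L+j)!), for integers M ≥ L > N ≥ 1. -/

import Mathlib

/-- Binomial coefficient `C(a, k)` for integer arguments, with the convention
that it vanishes when `k < 0` or `k > a`. -/
def zchoose (a k : ℤ) : ℕ :=
  if 0 ≤ k ∧ k ≤ a then a.toNat.choose k.toNat else 0

open Finset Matrix

private lemma sumid (c : ℕ) : ∀ i, ∀ y : ℕ, i ≤ c →
    (∑ k ∈ Finset.range (i+1), (-1:ℚ)^k * (i.choose k) * ((y+k).choose c))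
      = (-1:ℚ)^i * (y.choose (c-i)) := by
  intro i
  induction i with
  | zero => intro y _; simp
  | succ i ih =>
    intro y hic
    have hic' : i ≤ c := by omega
    rw [Finset.sum_range_succ']
    simp only [Nat.choose_zero_right, Nat.cast_one, pow_zero, one_mul, mul_one, Nat.add_zero]
    have e1 : ∀ k ∈ Finset.range (i+1),
        (-1:ℚ)^(k+1) * ((i+1).choose (k+1)) * ((y+(k+1)).choose c)
          = -((-1:ℚ)^k * (i.choose k) * (((y+1)+k).choose c))
            + ((-1:ℚ)^(k+1) * (i.choose (k+1)) * ((y+(k+1)).choose c)) := by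
      intro k _
      have hy : (y+1)+k = y+(k+1) := by omega
      rw [hy, Nat.choose_succ_succ]
      push_cast [Nat.succ_eq_add_one]
      ring
    rw [Finset.sum_congr rfl e1, Finset.sum_add_distrib, Finset.sum_neg_distrib]
    have e2 : (∑ k ∈ Finset.range (i+1), (-1:ℚ)^(k+1) * (i.choose (k+1)) * ((y+(k+1)).choose c))
        = (∑ k ∈ Finset.range (i+1), (-1:ℚ)^k * (i.choose k) * ((y+k).choose c))
          - ((y).choose c : ℚ) := by
      have h3 := Finset.sum_range_succ' (fun m => (-1:ℚ)^m * (i.choose m) * ((y+m).choose c)) (i+1)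
      have h4 := Finset.sum_range_succ (fun m => (-1:ℚ)^m * (i.choose m) * ((y+m).choose c)) (i+1)
      simp only [Nat.choose_succ_self, Nat.cast_zero, mul_zero, zero_mul, add_zero,
        Nat.choose_zero_right, Nat.cast_one, mul_one, pow_zero, one_mul, Nat.add_zero] at h3 h4
      rw [h4] at h3
      linarith
    rw [e2, ih (y+1) hic', ih y hic']
    have hp : (y+1).choose (c-i) = y.choose (c-(i+1)) + y.choose (c-i) := by
      have h6 : c - i = (c - (i+1)) + 1 := by omega
      rw [h6, Nat.choose_succ_succ]
    have h7 : c - i = (c - (i+1)) + 1 := by omega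
    rw [h7] at hp ⊢
    rw [hp]
    push_cast
    ring

/-- The determinant of the `N × N` matrix with `(i,j)` entry `C(M+i-j, L-N+i-j)`
equals `∏_{j=1}^{N} (j-1)! (M-N+j)! / ((L-N+j-1)! (M-L+j)!)`, for `M ≥ L > N ≥ 1`. -/
theorem det_binomial_eq_product (L M N : ℕ) (hN : 1 ≤ N) (hNL : N < L) (hLM : L ≤ M) :
    (Matrix.of fun i j : Fin N =>
        (zchoose ((M : ℤ) + (i.1 + 1) - (j.1 + 1))
                 ((L : ℤ) - N + (i.1 + 1) - (j.1 + 1)) : ℚ)).det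
      = ∏ j ∈ Finset.Icc 1 N,
          ((Nat.factorial (j - 1) : ℚ) * (Nat.factorial (M - N + j) : ℚ)) /
            ((Nat.factorial (L - N + j - 1) : ℚ) * (Nat.factorial (M - L + j) : ℚ)) := by
  set c : ℕ := M - L + N with hc
  have hcN : N ≤ c := by omega
  -- Step A : entries are C(M+i-j, c)
  have hA : (Matrix.of fun i j : Fin N =>
        (zchoose ((M : ℤ) + (i.1 + 1) - (j.1 + 1))
                 ((L : ℤ) - N + (i.1 + 1) - (j.1 + 1)) : ℚ))
      = Matrix.of (fun i j : Fin N => (((M + i.1 - j.1).choose c : ℕ) : ℚ)) := by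
    ext i j
    have hi := i.2; have hj := j.2
    simp only [Matrix.of_apply]
    congr 1
    by_cases h : (0:ℤ) ≤ (L : ℤ) - N + (i.1 + 1) - (j.1 + 1)
    · rw [zchoose, if_pos ⟨h, by push_cast; omega⟩]
      have h1 : ((L : ℤ) - N + (i.1 + 1) - (j.1 + 1)).toNat ≤ M + i.1 - j.1 := by omega
      have h2 : (M + i.1 - j.1) - ((L : ℤ) - N + (i.1 + 1) - (j.1 + 1)).toNat = c := by omega
      have h3 : ((M : ℤ) + (i.1 + 1) - (j.1 + 1)).toNat = M + i.1 - j.1 := by omega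
      rw [h3, ← h2, Nat.choose_symm h1]
    · rw [zchoose, if_neg (by tauto)]
      rw [eq_comm, Nat.choose_eq_zero_of_lt (by omega)]
  rw [hA]
  -- Step B : difference transform, det equals det of C(M-j, c-i)
  set A1 : Matrix (Fin N) (Fin N) ℚ :=
    Matrix.of (fun i j : Fin N => (((M + i.1 - j.1).choose c : ℕ) : ℚ)) with hA1
  set A2 : Matrix (Fin N) (Fin N) ℚ :=
    Matrix.of (fun i j : Fin N => (((M - j.1).choose (c - i.1) : ℕ) : ℚ)) with hA2
  set T : Matrix (Fin N) (Fin N) ℚ :=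
    Matrix.of (fun i k : Fin N => (-1:ℚ)^k.1 * (i.1.choose k.1)) with hT
  have hdet12 : A1.det = A2.det := by
    have hTA : T * A1 = Matrix.of (fun i j : Fin N => (-1:ℚ)^i.1 * A2 i j) := by
      ext i j
      have hi := i.2; have hj := j.2
      rw [Matrix.mul_apply]
      have h1 : ∀ k : Fin N, T i k * A1 k j
          = (fun m : ℕ => (-1:ℚ)^m * (i.1.choose m) * (((M - j.1) + m).choose c)) k.1 := by
        intro k
        simp only [hT, hA1, Matrix.of_apply]
        have : M + k.1 - j.1 = (M - j.1) + k.1 := by omega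
        rw [this, mul_assoc]
      rw [show (∑ k : Fin N, T i k * A1 k j) = ∑ m ∈ Finset.range N,
            (-1:ℚ)^m * (i.1.choose m) * (((M - j.1) + m).choose c) from by
          rw [← Fin.sum_univ_eq_sum_range (fun m => (-1:ℚ)^m * (i.1.choose m)
            * (((M - j.1) + m).choose c)) N]
          exact Finset.sum_congr rfl (fun k _ => h1 k)]
      have h2 : ∑ m ∈ Finset.range N,
            (-1:ℚ)^m * (i.1.choose m) * (((M - j.1) + m).choose c)
          = ∑ m ∈ Finset.range (i.1+1),
            (-1:ℚ)^m * (i.1.choose m) * (((M - j.1) + m).choose c) := by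
        rw [eq_comm]
        apply Finset.sum_subset
        · intro x hx; simp only [Finset.mem_range] at *; omega
        · intro x hx hx'
          simp only [Finset.mem_range] at hx hx'
          rw [Nat.choose_eq_zero_of_lt (by omega)]
          simp
      rw [h2, sumid c i.1 (M - j.1) (by omega)]
      simp [hA2]
    have hdT : T.det = ∏ i : Fin N, (-1:ℚ)^i.1 := by
      rw [Matrix.det_of_lowerTriangular T ?_]
      · simp [hT]
      · intro i j hij
        simp only [hT, Matrix.of_apply]
        rw [Nat.choose_eq_zero_of_lt (by exact hij)]
        simp
    have hprod : (∏ i : Fin N, (-1:ℚ)^i.1) ≠ 0 := by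
      apply Finset.prod_ne_zero_iff.mpr
      intro i _
      simp
    have h3 : (∏ i : Fin N, (-1:ℚ)^i.1) * A1.det = (∏ i : Fin N, (-1:ℚ)^i.1) * A2.det := by
      calc (∏ i : Fin N, (-1:ℚ)^i.1) * A1.det = T.det * A1.det := by rw [hdT]
        _ = (T * A1).det := (Matrix.det_mul T A1).symm
        _ = (Matrix.of (fun i j : Fin N => (-1:ℚ)^i.1 * A2 i j)).det := by rw [hTA]
        _ = (∏ i : Fin N, (-1:ℚ)^i.1) * A2.det := Matrix.det_mul_column _ _
    exact mul_left_cancel₀ hprod h3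
  rw [hdet12]
  -- Step C : factor A2
  have hfac : A2 = Matrix.of (fun i j : Fin N =>
      (((c - i.1).factorial : ℚ))⁻¹ *
        ((((M - j.1).descFactorial (M - L + 1) : ℕ) : ℚ) *
          (((L - 1 - j.1).descFactorial (N - 1 - i.1) : ℕ) : ℚ))) := by
    ext i j
    have hi := i.2; have hj := j.2
    simp only [hA2, Matrix.of_apply]
    have key : (L - 1 - j.1).descFactorial (N - 1 - i.1) * (M - j.1).descFactorial (M - L + 1)
        = (M - j.1).descFactorial (c - i.1) := by
      have h1 : M - L + 1 ≤ c - i.1 := by omega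
      have := Nat.descFactorial_mul_descFactorial (k := M - L + 1) (m := c - i.1)
        (n := M - j.1) h1
      have h2 : M - j.1 - (M - L + 1) = L - 1 - j.1 := by omega
      have h3 : c - i.1 - (M - L + 1) = N - 1 - i.1 := by omega
      rw [h2, h3] at this
      exact this
    have hdc : (M - j.1).descFactorial (c - i.1) = (c - i.1).factorial * (M - j.1).choose (c - i.1) :=
      Nat.descFactorial_eq_factorial_mul_choose _ _
    have hne : (((c - i.1).factorial : ℚ)) ≠ 0 := Nat.cast_ne_zero.mpr (Nat.factorial_ne_zero _)
    rw [inv_mul_eq_div, eq_div_iff hne]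
    norm_cast
    rw [mul_comm, ← hdc, ← key, mul_comm]
  -- Step C' : pull out row and column factors
  obtain ⟨n, rfl⟩ : ∃ n, N = n + 1 := ⟨N - 1, by omega⟩
  set u : Fin (n+1) → ℚ := fun i => (((c - i.1).factorial : ℚ))⁻¹ with hu
  set w : Fin (n+1) → ℚ := fun j => (((M - j.1).descFactorial (M - L + 1) : ℕ) : ℚ) with hw
  set V : Matrix (Fin (n+1)) (Fin (n+1)) ℚ :=
    Matrix.of (fun i j : Fin (n+1) => (((L - 1 - j.1).descFactorial (n - i.1) : ℕ) : ℚ)) with hV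
  have hsplit : (Matrix.of (fun i j : Fin (n+1) =>
      (((c - i.1).factorial : ℚ))⁻¹ *
        ((((M - j.1).descFactorial (M - L + 1) : ℕ) : ℚ) *
          (((L - 1 - j.1).descFactorial (n + 1 - 1 - i.1) : ℕ) : ℚ)))).det
      = (∏ i : Fin (n+1), u i) * ((∏ j : Fin (n+1), w j) * V.det) := by
    have e : (Matrix.of (fun i j : Fin (n+1) =>
        (((c - i.1).factorial : ℚ))⁻¹ *
          ((((M - j.1).descFactorial (M - L + 1) : ℕ) : ℚ) *
            (((L - 1 - j.1).descFactorial (n + 1 - 1 - i.1) : ℕ) : ℚ))))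
        = Matrix.of (fun i j : Fin (n+1) =>
            u i * (Matrix.of (fun i j : Fin (n+1) => w j * V i j)) i j) := rfl
    rw [e, Matrix.det_mul_column u, Matrix.det_mul_row w V]
  rw [hfac, hsplit]
  -- Step D : the Vandermonde determinant
  set W : Matrix (Fin (n+1)) (Fin (n+1)) ℚ :=
    Matrix.of (fun i j : Fin (n+1) => (((L - (n+1) + j.1).descFactorial i.1 : ℕ) : ℚ)) with hWd
  have hVW : V = W.submatrix Fin.revPerm Fin.revPerm := by
    ext i j
    have hi := i.2; have hj := j.2
    simp only [hV, hWd, Matrix.of_apply, Matrix.submatrix_apply, Equiv.coe_fn_mk,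
      Fin.revPerm_apply]
    have h1 : (Fin.rev i).1 = n - i.1 := by
      rw [Fin.val_rev]; omega
    have h2 : (Fin.rev j).1 = n - j.1 := by
      rw [Fin.val_rev]; omega
    rw [h1, h2]
    have h3 : L - (n+1) + (n - j.1) = L - 1 - j.1 := by omega
    rw [h3]
  have hWdet : W.det = (Nat.superFactorial n : ℚ) := by
    have hWt : W = (Matrix.of (fun i j : Fin (n+1) =>
        (descPochhammer ℚ j.1).eval (((L - (n+1) + i.1 : ℕ) : ℚ))))ᵀ := by
      ext i j
      simp only [hWd, Matrix.of_apply, Matrix.transpose_apply,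
        descPochhammer_eval_eq_descFactorial]
    rw [hWt, Matrix.det_transpose,
      ← Matrix.det_eval_matrixOfPolynomials_eq_det_vandermonde
        (fun i : Fin (n+1) => (((L - (n+1) + i.1 : ℕ) : ℚ)))
        (fun j : Fin (n+1) => descPochhammer ℚ j.1)
        (fun j => descPochhammer_natDegree (R := ℚ) j.1)
        (fun j => monic_descPochhammer ℚ j.1)]
    have hvv : (fun i : Fin (n+1) => (((L - (n+1) + i.1 : ℕ) : ℚ)))
        = fun i : Fin (n+1) => ((i : ℚ) + ((L - (n+1) : ℕ) : ℚ)) := by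
      funext i
      push_cast
      ring
    rw [hvv, Matrix.det_vandermonde_add, Matrix.det_vandermonde_id_eq_superFactorial]
  have hVdet : V.det = (Nat.superFactorial n : ℚ) := by
    rw [hVW, Matrix.det_submatrix_equiv_self, hWdet]
  rw [hVdet]
  -- Step E : assembly
  have hsf : (Nat.superFactorial n : ℚ) = ∏ t ∈ Finset.range (n+1), ((t.factorial : ℕ) : ℚ) := by
    rw [← Nat.prod_range_succ_factorial]
    push_cast
    rfl
  have hP1 : (∏ i : Fin (n+1), u i)
      = ∏ i ∈ Finset.range (n+1), (((M - L + 1 + i).factorial : ℚ))⁻¹ := by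
    rw [hu, Fin.prod_univ_eq_prod_range (fun i => (((c - i).factorial : ℚ))⁻¹) (n+1),
      ← Finset.prod_range_reflect]
    refine Finset.prod_congr rfl (fun i hi => ?_)
    simp only [Finset.mem_range] at hi
    have : c - (n + 1 - 1 - i) = M - L + 1 + i := by omega
    rw [this]
  have hP2 : (∏ j : Fin (n+1), w j)
      = ∏ j ∈ Finset.range (n+1),
          (((M - n + j).factorial : ℚ) * (((L - 1 - n + j).factorial : ℚ))⁻¹) := by
    rw [hw, Fin.prod_univ_eq_prod_range
      (fun j => (((M - j).descFactorial (M - L + 1) : ℕ) : ℚ)) (n+1),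
      ← Finset.prod_range_reflect]
    refine Finset.prod_congr rfl (fun j hj => ?_)
    simp only [Finset.mem_range] at hj
    have h1 : M - (n + 1 - 1 - j) = M - n + j := by omega
    rw [h1]
    have h2 : M - L + 1 ≤ M - n + j := by omega
    have h3 := Nat.factorial_mul_descFactorial h2
    have h4 : M - n + j - (M - L + 1) = L - 1 - n + j := by omega
    rw [h4] at h3
    have hne : (((L - 1 - n + j).factorial : ℚ)) ≠ 0 := Nat.cast_ne_zero.mpr (Nat.factorial_ne_zero _)
    field_simp
    rw [mul_comm]
    exact_mod_cast congrArg (Nat.cast (R := ℚ)) h3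
  rw [hsf, hP1, hP2, ← Finset.prod_mul_distrib, ← Finset.prod_mul_distrib]
  -- rewrite the RHS over `range (n+1)`
  rw [show Finset.Icc 1 (n+1) = Finset.Ico 1 (n+2) from (Finset.Ico_add_one_right_eq_Icc 1 (n+1)).symm,
    Finset.prod_Ico_eq_prod_range]
  have hn2 : n + 2 - 1 = n + 1 := by omega
  rw [hn2]
  refine Finset.prod_congr rfl (fun t ht => ?_)
  simp only [Finset.mem_range] at ht
  have e1 : 1 + t - 1 = t := by omega
  have e2 : M - (n+1) + (1 + t) = M - n + t := by omega
  have e3 : L - (n+1) + (1 + t) - 1 = L - 1 - n + t := by omega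
  have e4 : M - L + (1 + t) = M - L + 1 + t := by omega
  rw [e1, e2, e3, e4]
  have h1 : ((t.factorial : ℕ) : ℚ) ≠ 0 := Nat.cast_ne_zero.mpr (Nat.factorial_ne_zero _)
  have h2 : (((L - 1 - n + t).factorial : ℕ) : ℚ) ≠ 0 := Nat.cast_ne_zero.mpr (Nat.factorial_ne_zero _)
  have h3 : (((M - L + 1 + t).factorial : ℕ) : ℚ) ≠ 0 := Nat.cast_ne_zero.mpr (Nat.factorial_ne_zero _)
  field_simp
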